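/- Let λ₁ > ... > λ_m > 0 distinct, n < m, ψ ∈ ℝ_+^m with cardinality ≥ n, Ψ = diag(ψ), and z = z(ψ) = 𝟙 − Λ V (Vᵀ Ψ Λ V)⁻¹ Vᵀ ψ. If Ψ z = 0 (i.e. ψ_i z_i = 0 for all i), then ψ has cardinality exactly n. -/

import Mathlib

open Finset Matrix

/-- `(a,b)` entry `λ_{τ(a)}^{b+1}`: the matrix `S_τᵀ Λ V`. -/
noncomputable def selLV {m : ℕ} (l : Fin m → ℝ) (n : ℕ) (τ : Finset (Fin m))
    (h : τ.card = n) : Matrix (Fin n) (Fin n) ℝ :=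
  Matrix.of fun a b => l (τ.orderEmbOfFin h a) ^ ((b : ℕ) + 1)

/-- The extreme coefficient vector `α_{(τ)} = (S_τᵀ Λ V)⁻¹ 𝟙`. -/
noncomputable def alphaTau {m : ℕ} (l : Fin m → ℝ) (n : ℕ) (τ : Finset (Fin m))
    (h : τ.card = n) : Fin n → ℝ :=
  (selLV l n τ h)⁻¹ *ᵥ (fun _ => 1)

/-- The matrix `Vᵀ Ψ Λ V`, with `(a,b)` entry `∑ i, λ_i^a ψ_i λ_i^{b+1}`. -/
noncomputable def Bmat {m : ℕ} (l ψ : Fin m → ℝ) (n : ℕ) : Matrix (Fin n) (Fin n) ℝ :=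
  Matrix.of fun a b => ∑ i : Fin m, l i ^ (a : ℕ) * ψ i * l i ^ ((b : ℕ) + 1)

/-- The coefficient map `α(ψ) = (Vᵀ Ψ Λ V)⁻¹ Vᵀ ψ`. -/
noncomputable def alphaMap {m : ℕ} (l ψ : Fin m → ℝ) (n : ℕ) : Fin n → ℝ :=
  (Bmat l ψ n)⁻¹ *ᵥ (fun a => ∑ i : Fin m, l i ^ (a : ℕ) * ψ i)

/-- The shrinkage vector `ω(ψ) = Λ V α(ψ)`. -/
noncomputable def omegaMap {m : ℕ} (l ψ : Fin m → ℝ) (n : ℕ) : Fin m → ℝ :=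
  fun i => ∑ j : Fin n, l i ^ ((j : ℕ) + 1) * alphaMap l ψ n j

/-- The relative residual vector `z(ψ) = 𝟙 - ω(ψ)`. -/
noncomputable def zMap {m : ℕ} (l ψ : Fin m → ℝ) (n : ℕ) : Fin m → ℝ :=
  fun i => 1 - omegaMap l ψ n i

/-- `ψ^τ = ∏_{i∈τ} ψ_i`. -/
def psiPow {m : ℕ} (ψ : Fin m → ℝ) (τ : Finset (Fin m)) : ℝ := ∏ i ∈ τ, ψ i

/-- `π_τ = (∏_{j∈τ} λ_j) ∏_{j<i∈τ} (λ_i - λ_j)²`. -/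
def piTau {m : ℕ} (l : Fin m → ℝ) (τ : Finset (Fin m)) : ℝ :=
  (∏ j ∈ τ, l j) * ∏ j ∈ τ, ∏ i ∈ τ.filter (fun x => j < x), (l i - l j) ^ 2

/-- The number of nonzero entries of a vector. -/
noncomputable def suppCard {m : ℕ} (ψ : Fin m → ℝ) : ℕ :=
  ({i : Fin m | ψ i ≠ 0}).ncard

theorem stmt10 {m n : ℕ} (hnm : n < m) (l : Fin m → ℝ) (hpos : ∀ i, 0 < l i)
    (hanti : StrictAnti l) (ψ : Fin m → ℝ) (hψ : ∀ i, 0 ≤ ψ i)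
    (hcard : n ≤ suppCard ψ)
    (hzero : ∀ i, ψ i * zMap l ψ n i = 0) :
    suppCard ψ = n := by
  classical
  set α := alphaMap l ψ n with hα
  set p : Polynomial ℝ :=
    1 - ∑ j : Fin n, Polynomial.C (α j) * Polynomial.X ^ ((j : ℕ) + 1) with hp
  have hp0 : p.coeff 0 = 1 := by
    simp [hp, Polynomial.finset_sum_coeff, Polynomial.coeff_X_pow]
  have hpne : p ≠ 0 := fun h => by simp [h] at hp0
  have hdeg : p.natDegree ≤ n := by
    refine le_trans (Polynomial.natDegree_sub_le _ _) (max_le (by simp) ?_)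
    apply Polynomial.natDegree_sum_le_of_forall_le
    intro j _
    refine le_trans (Polynomial.natDegree_C_mul_le _ _) ?_
    simpa using Nat.succ_le_of_lt j.2
  have heval : ∀ i, p.eval (l i) = zMap l ψ n i := by
    intro i
    rw [hp]
    simp only [Polynomial.eval_sub, Polynomial.eval_one, Polynomial.eval_finset_sum,
      Polynomial.eval_mul, Polynomial.eval_C, Polynomial.eval_pow, Polynomial.eval_X]
    unfold zMap omegaMap
    congr 1
    exact Finset.sum_congr rfl fun j _ => mul_comm _ _
  have key : ∀ i, ψ i ≠ 0 → l i ∈ p.roots := by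
    intro i hi
    rcases mul_eq_zero.1 (hzero i) with h | h
    · exact absurd h hi
    · rw [Polynomial.mem_roots hpne, Polynomial.IsRoot, heval]
      exact h
  have hsc : suppCard ψ = (Finset.univ.filter (fun i => ψ i ≠ 0)).card := by
    rw [suppCard, show {i : Fin m | ψ i ≠ 0} = ↑(Finset.univ.filter fun i => ψ i ≠ 0) by
      ext; simp]
    exact Set.ncard_coe_finset _
  have hle : suppCard ψ ≤ n := by
    rw [hsc]
    have h1 : (Finset.univ.filter (fun i => ψ i ≠ 0)).card ≤ p.roots.toFinset.card := by
      apply Finset.card_le_card_of_injOn l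
      · intro i hi
        simp only [Finset.mem_coe, Finset.mem_filter] at hi
        exact Multiset.mem_toFinset.2 (key i hi.2)
      · exact fun a _ b _ h => hanti.injective h
    refine h1.trans (le_trans (Multiset.toFinset_card_le _) ?_)
    exact le_trans (Polynomial.card_roots' p) hdeg
  exact le_antisymm hle hcard
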